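/- For every rational qualitative plausibility space (W, Pl) there is a default-equivalent plausibility space (W, Pl') where Pl' is a ranking: Pl' has a totally ordered range, satisfies Pl'(A ∪ B) = max(Pl'(A), Pl'(B)), and for all disjoint A, B we have Pl(A) < Pl(B) iff Pl'(A) < Pl'(B). -/

import Mathlib

universe u v

theorem rational_default_equivalent_ranking {W : Type u} {D : Type v}
    [PartialOrder D] [BoundedOrder D]
    (Pl : Set W → D)
    (hTop : Pl Set.univ = ⊤) (hBot : Pl (∅ : Set W) = ⊥)
    (A1 : ∀ A B : Set W, A ⊆ B → Pl A ≤ Pl B)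
    (A2 : ∀ A B C : Set W, Disjoint A B → Disjoint A C → Disjoint B C →
      Pl C < Pl (A ∪ B) → Pl B < Pl (A ∪ C) → Pl (B ∪ C) < Pl A)
    (A3 : ∀ A B : Set W, Pl A = ⊥ → Pl B = ⊥ → Pl (A ∪ B) = ⊥)
    (A4 : ∀ A B C : Set W, Disjoint A B → Disjoint A C → Disjoint B C →
      Pl A < Pl B → Pl A < Pl C ∨ Pl C < Pl B)
    (A5 : ∀ A B C : Set W, Disjoint A B → Disjoint A C → Disjoint B C →
      Pl A < Pl (B ∪ C) → Pl A < Pl B ∨ Pl A < Pl C) :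
    ∃ (D' : Type (max u v)) (_ : LinearOrder D') (Pl' : Set W → D'),
      (∀ A B : Set W, Pl' (A ∪ B) = max (Pl' A) (Pl' B)) ∧
      (∀ A B : Set W, Disjoint A B → (Pl A < Pl B ↔ Pl' A < Pl' B)) := by
  classical
  -- irreflexivity of the relation  A ≺ B := Pl A < Pl (B \ A)
  have hirr : ∀ A : Set W, ¬ Pl A < Pl (A \ A) := by
    intro A h
    rw [Set.diff_self, hBot] at h
    exact not_lt_bot h
  -- asymmetry
  have hasym : ∀ A B : Set W, Pl A < Pl (B \ A) → ¬ Pl B < Pl (A \ B) := by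
    intro A B h1 h2
    exact lt_irrefl _ ((h1.trans_le (A1 _ _ Set.diff_subset)).trans
      (h2.trans_le (A1 _ _ Set.diff_subset)))
  -- negative transitivity (the key lemma, uses A2, A4, A5)
  have hneg : ∀ A B C : Set W, Pl C < Pl (A \ C) →
      Pl C < Pl (B \ C) ∨ Pl B < Pl (A \ B) := by
    intro A B C hCA
    by_cases hCB : Pl C < Pl (B \ C)
    · exact Or.inl hCB
    right
    set A0 : Set W := A \ (B ∪ C) with hA0
    have hsplit : A \ C = A0 ∪ ((A ∩ B) \ C) := by
      ext x
      simp only [hA0, Set.mem_diff, Set.mem_union, Set.mem_inter_iff]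
      tauto
    have hd1 : Disjoint C A0 := by
      rw [Set.disjoint_left]; intro x hx hx2; exact hx2.2 (Or.inr hx)
    have hd2 : Disjoint C ((A ∩ B) \ C) := by
      rw [Set.disjoint_left]; intro x hx hx2; exact hx2.2 hx
    have hd3 : Disjoint A0 ((A ∩ B) \ C) := by
      rw [Set.disjoint_left]; intro x hx hx2; exact hx.2 (Or.inl hx2.1.2)
    rw [hsplit] at hCA
    have hCA0 : Pl C < Pl A0 := by
      rcases A5 C A0 ((A ∩ B) \ C) hd1 hd2 hd3 hCA with h | h
      · exact h
      · exact absurd (h.trans_le (A1 _ _ (show (A ∩ B) \ C ⊆ B \ C from fun x hx => ⟨hx.1.2, hx.2⟩))) hCB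
    have hdCB : Disjoint C (B \ C) := by
      rw [Set.disjoint_left]; intro x hx hx2; exact hx2.2 hx
    have hdA0BC : Disjoint A0 (B \ C) := by
      rw [Set.disjoint_left]; intro x hx hx2; exact hx.2 (Or.inl hx2.1)
    have hBC0 : Pl (B \ C) < Pl A0 :=
      (A4 C A0 (B \ C) hd1 hdCB hdA0BC hCA0).resolve_left hCB
    have hdA0BcapC : Disjoint A0 (B ∩ C) := by
      rw [Set.disjoint_left]; intro x hx hx2; exact hx.2 (Or.inl hx2.1)
    have hdBcapC : Disjoint (B ∩ C) (B \ C) := by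
      rw [Set.disjoint_left]; intro x hx hx2; exact hx2.2 hx.2
    have hyp1 : Pl (B \ C) < Pl (A0 ∪ (B ∩ C)) :=
      hBC0.trans_le (A1 _ _ Set.subset_union_left)
    have hyp2 : Pl (B ∩ C) < Pl (A0 ∪ (B \ C)) :=
      ((A1 _ _ Set.inter_subset_right).trans_lt hCA0).trans_le
        (A1 _ _ Set.subset_union_left)
    have h2 := A2 A0 (B ∩ C) (B \ C) hdA0BcapC hdA0BC hdBcapC hyp1 hyp2
    rw [Set.inter_union_diff B C] at h2
    exact h2.trans_le (A1 _ _ (show A0 ⊆ A \ B from fun x hx => ⟨hx.1, fun hxB => hx.2 (Or.inl hxB)⟩))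
  -- the equivalence relation: mutual incomparability
  have requiv : Equivalence
      (fun A B : Set W => ¬ Pl A < Pl (B \ A) ∧ ¬ Pl B < Pl (A \ B)) := by
    constructor
    · intro A; exact ⟨hirr A, hirr A⟩
    · intro A B h; exact ⟨h.2, h.1⟩
    · intro A B C hAB hBC
      constructor
      · intro h
        rcases hneg C B A h with h' | h'
        · exact hAB.1 h'
        · exact hBC.1 h'
      · intro h
        rcases hneg A B C h with h' | h'
        · exact hBC.2 h'
        · exact hAB.2 h'
  let s : Setoid (Set W) := ⟨_, requiv⟩
  -- transport lemma for well-definedness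
  have hrepl : ∀ A A' B B' : Set W,
      (¬ Pl A < Pl (A' \ A) ∧ ¬ Pl A' < Pl (A \ A')) →
      (¬ Pl B < Pl (B' \ B) ∧ ¬ Pl B' < Pl (B \ B')) →
      Pl B < Pl (A \ B) → Pl B' < Pl (A' \ B') := by
    intro A A' B B' hA hB h
    have h1 : Pl B < Pl (A' \ B) := (hneg A A' B h).resolve_right hA.2
    exact (hneg A' B' B h1).resolve_left hB.1
  letI instQ : LinearOrder (Quotient s) :=
  { le := Quotient.lift₂ (fun A B : Set W => ¬ Pl B < Pl (A \ B))
      (by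
        intro A B A' B' hA hB
        have hA' : ¬ Pl A < Pl (A' \ A) ∧ ¬ Pl A' < Pl (A \ A') := hA
        have hB' : ¬ Pl B < Pl (B' \ B) ∧ ¬ Pl B' < Pl (B \ B') := hB
        apply propext
        constructor
        · intro h h'
          exact h (hrepl A' A B' B ⟨hA'.2, hA'.1⟩ ⟨hB'.2, hB'.1⟩ h')
        · intro h h'
          exact h (hrepl A A' B B' hA' hB' h'))
    le_refl := fun a => Quotient.inductionOn a (fun A => hirr A)
    le_trans := fun a b c => Quotient.inductionOn₃ a b c (by
      intro A B C hab hbc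
      intro h
      rcases hneg A B C h with h' | h'
      · exact hbc h'
      · exact hab h')
    le_antisymm := fun a b => Quotient.inductionOn₂ a b (by
      intro A B h1 h2
      exact Quotient.sound ⟨h2, h1⟩)
    le_total := fun a b => Quotient.inductionOn₂ a b (by
      intro A B
      by_cases h : Pl B < Pl (A \ B)
      · exact Or.inr (hasym B A h)
      · exact Or.inl h)
    lt := fun a b => Quotient.lift₂ (fun A B : Set W => ¬ Pl B < Pl (A \ B))
        (by
          intro A B A' B' hA hB
          have hA' : ¬ Pl A < Pl (A' \ A) ∧ ¬ Pl A' < Pl (A \ A') := hA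
          have hB' : ¬ Pl B < Pl (B' \ B) ∧ ¬ Pl B' < Pl (B \ B') := hB
          apply propext
          constructor
          · intro h h'
            exact h (hrepl A' A B' B ⟨hA'.2, hA'.1⟩ ⟨hB'.2, hB'.1⟩ h')
          · intro h h'
            exact h (hrepl A A' B B' hA' hB' h')) a b ∧
        ¬ Quotient.lift₂ (fun A B : Set W => ¬ Pl B < Pl (A \ B))
        (by
          intro A B A' B' hA hB
          have hA' : ¬ Pl A < Pl (A' \ A) ∧ ¬ Pl A' < Pl (A \ A') := hA
          have hB' : ¬ Pl B < Pl (B' \ B) ∧ ¬ Pl B' < Pl (B \ B') := hB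
          apply propext
          constructor
          · intro h h'
            exact h (hrepl A' A B' B ⟨hA'.2, hA'.1⟩ ⟨hB'.2, hB'.1⟩ h')
          · intro h h'
            exact h (hrepl A A' B B' hA' hB' h')) b a
    lt_iff_le_not_ge := fun _ _ => Iff.rfl
    toDecidableLE := fun _ _ => Classical.dec _ }
  letI instU : LinearOrder (ULift.{v} (Quotient s)) :=
    LinearOrder.lift' ULift.down ULift.down_injective
  refine ⟨ULift.{v} (Quotient s), instU, fun X => ULift.up (Quotient.mk s X),
    fun A B => ?_, fun A B hd => ?_⟩
  · -- union is max
    have h1 : @LE.le _ instU.toLE (ULift.up (Quotient.mk s A) : ULift.{v} (Quotient s))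
        (ULift.up (Quotient.mk s (A ∪ B))) := by
      show ¬ Pl (A ∪ B) < Pl (A \ (A ∪ B))
      have e : A \ (A ∪ B) = ∅ := Set.diff_eq_empty.mpr Set.subset_union_left
      rw [e, hBot]
      exact not_lt_bot
    have h2 : @LE.le _ instU.toLE (ULift.up (Quotient.mk s B) : ULift.{v} (Quotient s))
        (ULift.up (Quotient.mk s (A ∪ B))) := by
      show ¬ Pl (A ∪ B) < Pl (B \ (A ∪ B))
      have e : B \ (A ∪ B) = ∅ := Set.diff_eq_empty.mpr Set.subset_union_right
      rw [e, hBot]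
      exact not_lt_bot
    rcases le_total (ULift.up (Quotient.mk s A) : ULift.{v} (Quotient s))
        (ULift.up (Quotient.mk s B)) with hab | hba
    · rw [max_eq_right hab]
      refine le_antisymm ?_ h2
      show ¬ Pl B < Pl ((A ∪ B) \ B)
      rw [Set.union_diff_right]
      exact hab
    · rw [max_eq_left hba]
      refine le_antisymm ?_ h1
      show ¬ Pl A < Pl ((A ∪ B) \ A)
      rw [Set.union_diff_left]
      exact hba
  · -- default equivalence on disjoint sets
    have e1 : B \ A = B := hd.symm.sdiff_eq_left
    have e2 : A \ B = A := hd.sdiff_eq_left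
    constructor
    · intro h
      rw [@lt_iff_le_not_ge _ instU.toPreorder]
      constructor
      · show ¬ Pl B < Pl (A \ B)
        rw [e2]
        exact fun h' => lt_irrefl _ (h.trans h')
      · intro hge
        have hge' : ¬ Pl A < Pl (B \ A) := hge
        exact hge' (by rw [e1]; exact h)
    · intro h
      rw [@lt_iff_le_not_ge _ instU.toPreorder] at h
      have hlt : Pl A < Pl (B \ A) := by
        by_contra hc
        exact h.2 hc
      rw [e1] at hlt
      exact hlt
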